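/- arXiv:1107.3548 — 2 statements merged into one kernel-verified Lean document; each statement's English description precedes it below -/
import Mathlib

section
/- Let Γ be a real n×n matrix whose symmetric part is positive definite. Then Γ is invertible, the function s ↦ exp(−sΓ) (matrix exponential) is Bochner integrable on [0, ∞), and ∫₀^∞ exp(−sΓ) ds = Γ⁻¹. -/
open Matrix MeasureTheory

section LAux

attribute [local instance] Matrix.linftyOpNormedRing Matrix.linftyOpNormedAlgebra

/-- Derivative of the matrix exponential, exported through `slope` so that it can be
transferred between (topologically equal) norm instances. -/
lemma stmt3_aux_slope {n : ℕ} (A : Matrix (Fin n) (Fin n) ℝ) (t : ℝ) :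
    Filter.Tendsto (slope (fun s : ℝ => NormedSpace.exp (s • A)) t) (nhdsWithin t {t}ᶜ)
      (nhds (NormedSpace.exp (t • A) * A)) :=
  hasDerivAt_iff_tendsto_slope.mp (hasDerivAt_exp_smul_const A t)

lemma stmt3_aux_slope2 {n : ℕ} (A B : Matrix (Fin n) (Fin n) ℝ) (t : ℝ) :
    Filter.Tendsto (slope (fun s : ℝ => -(NormedSpace.exp (s • A) * B)) t)
      (nhdsWithin t {t}ᶜ)
      (nhds (-(NormedSpace.exp (t • A) * A * B))) :=
  hasDerivAt_iff_tendsto_slope.mp (((hasDerivAt_exp_smul_const A t).mul_const B).neg)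

end LAux

attribute [local instance] Matrix.normedAddCommGroup Matrix.normedSpace

section SAux

variable {n : ℕ}

lemma stmt3_hasDerivAt_exp (A : Matrix (Fin n) (Fin n) ℝ) (t : ℝ) :
    HasDerivAt (fun s : ℝ => NormedSpace.exp (s • A)) (NormedSpace.exp (t • A) * A) t :=
  hasDerivAt_iff_tendsto_slope.mpr (stmt3_aux_slope A t)

lemma stmt3_hasDerivAt_exp_entry (A : Matrix (Fin n) (Fin n) ℝ) (t : ℝ) (i j : Fin n) :
    HasDerivAt (fun s : ℝ => NormedSpace.exp (s • A) i j)
      ((NormedSpace.exp (t • A) * A) i j) t := by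
  let L₀ : Matrix (Fin n) (Fin n) ℝ →ₗ[ℝ] ℝ :=
    (LinearMap.proj j).comp (LinearMap.proj (R := ℝ) (φ := fun _ : Fin n => Fin n → ℝ) i)
  let L := LinearMap.toContinuousLinearMap L₀
  exact L.hasFDerivAt.comp_hasDerivAt t (stmt3_hasDerivAt_exp A t)

lemma stmt3_hasDerivAt_exp_mul (A B : Matrix (Fin n) (Fin n) ℝ) (t : ℝ) :
    HasDerivAt (fun s : ℝ => -(NormedSpace.exp (s • A) * B))
      (-(NormedSpace.exp (t • A) * A * B)) t :=
  hasDerivAt_iff_tendsto_slope.mpr (stmt3_aux_slope2 A B t)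

lemma stmt3_cont_exp (A : Matrix (Fin n) (Fin n) ℝ) :
    Continuous (fun s : ℝ => NormedSpace.exp (s • A)) :=
  continuous_iff_continuousAt.mpr fun s => (stmt3_hasDerivAt_exp A s).continuousAt

/-- Exponential decay of `exp (s • -Γ)` when the symmetric part of `Γ` is positive definite. -/
lemma stmt3_norm_exp_le (Γ : Matrix (Fin n) (Fin n) ℝ) {c : ℝ} (hc : 0 < c)
    (hcle : ∀ v : Fin n → ℝ, c * (∑ i, v i ^ 2) ≤ v ⬝ᵥ Γ.mulVec v) :
    ∀ s : ℝ, 0 ≤ s → ‖NormedSpace.exp (s • -Γ)‖ ≤ Real.exp (-(c * s)) := by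
  set E : ℝ → Matrix (Fin n) (Fin n) ℝ := fun s => NormedSpace.exp (s • -Γ) with hE
  have hcomm : ∀ s : ℝ, E s * -Γ = -Γ * E s := by
    intro s
    exact (((Commute.refl (-Γ)).smul_right s).exp_right).eq.symm
  -- decay of quadratic norm of solutions
  have main : ∀ (v : Fin n → ℝ) (s : ℝ), 0 ≤ s →
      (∑ i, ((E s).mulVec v i) ^ 2) ≤ Real.exp (-(2 * c * s)) * (∑ i, v i ^ 2) := by
    intro v
    set w : ℝ → Fin n → ℝ := fun s => (E s).mulVec v with hw
    have hw' : ∀ (s : ℝ) (i : Fin n),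
        HasDerivAt (fun t => w t i) (-(Γ.mulVec (w s) i)) s := by
      intro s i
      have h1 : HasDerivAt (fun t => ∑ j, E t i j * v j) (∑ j, (E s * -Γ) i j * v j) s :=
        HasDerivAt.fun_sum fun j _ => (stmt3_hasDerivAt_exp_entry (-Γ) s i j).mul_const (v j)
      have h2 : (∑ j, (E s * -Γ) i j * v j) = -(Γ.mulVec (w s) i) := by
        have h0 : (∑ j, (E s * -Γ) i j * v j) = ((E s * -Γ).mulVec v) i := rfl
        rw [h0, hcomm s, ← Matrix.mulVec_mulVec, Matrix.neg_mulVec, Pi.neg_apply]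
      have h3 : (fun t : ℝ => w t i) = fun t => ∑ j, E t i j * v j := rfl
      rw [h3, ← h2]
      exact h1
    set g : ℝ → ℝ := fun s => ∑ i, (w s i) ^ 2 with hg
    have hg' : ∀ s : ℝ, HasDerivAt g (-2 * (w s ⬝ᵥ Γ.mulVec (w s))) s := by
      intro s
      have h1 : HasDerivAt g (∑ i, (2 : ℕ) * (w s i) ^ 1 * (-(Γ.mulVec (w s) i))) s :=
        HasDerivAt.fun_sum fun i _ => (hw' s i).pow 2
      have h2 : (∑ i, (2 : ℕ) * (w s i) ^ 1 * (-(Γ.mulVec (w s) i)))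
          = -2 * (w s ⬝ᵥ Γ.mulVec (w s)) := by
        rw [dotProduct, Finset.mul_sum]
        refine Finset.sum_congr rfl fun i _ => by push_cast; ring
      rwa [h2] at h1
    set h : ℝ → ℝ := fun s => Real.exp (2 * c * s) * g s with hh
    have hh' : ∀ s : ℝ, HasDerivAt h
        (Real.exp (2 * c * s) * (2 * c) * g s
          + Real.exp (2 * c * s) * (-2 * (w s ⬝ᵥ Γ.mulVec (w s)))) s := by
      intro s
      have H := (((hasDerivAt_id s).const_mul (2 * c)).exp.mul (hg' s))
      simp only [id_eq, mul_one] at H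
      exact H
    have hanti : Antitone h := by
      refine antitone_of_deriv_nonpos (fun s => (hh' s).differentiableAt) fun s => ?_
      rw [(hh' s).deriv]
      have hb : c * (∑ i, (w s i) ^ 2) ≤ w s ⬝ᵥ Γ.mulVec (w s) := hcle (w s)
      have hexp : (0 : ℝ) < Real.exp (2 * c * s) := Real.exp_pos _
      nlinarith [hexp, hb]
    intro s hs
    have h0 : h s ≤ h 0 := hanti hs
    have hg0 : g 0 = ∑ i, v i ^ 2 := by
      simp only [hg, hw, hE]
      rw [zero_smul, NormedSpace.exp_zero, Matrix.one_mulVec]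
    have hh0 : h 0 = ∑ i, v i ^ 2 := by
      simp only [hh, mul_zero, Real.exp_zero, one_mul, hg0]
    have hexp : (0 : ℝ) < Real.exp (2 * c * s) := Real.exp_pos _
    have hstep : Real.exp (2 * c * s) * g s ≤ ∑ i, v i ^ 2 := by
      have := h0; rw [hh0] at this; exact this
    have hgs : g s ≤ Real.exp (-(2 * c * s)) * (∑ i, v i ^ 2) := by
      rw [Real.exp_neg]
      calc g s = (Real.exp (2 * c * s) * g s) / Real.exp (2 * c * s) := by
            field_simp
        _ ≤ (∑ i, v i ^ 2) / Real.exp (2 * c * s) := by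
            exact div_le_div_of_nonneg_right hstep hexp.le |>.trans_eq rfl
        _ = (Real.exp (2 * c * s))⁻¹ * (∑ i, v i ^ 2) := by
            rw [div_eq_inv_mul]
    exact hgs
  -- entrywise bound
  intro s hs
  have hentry : ∀ i j, |E s i j| ≤ Real.exp (-(c * s)) := by
    intro i j
    set v₀ : Fin n → ℝ := Pi.single j 1 with hv₀
    have hm := main v₀ s hs
    have hv1 : (∑ i, (v₀ i) ^ 2) = 1 := by
      simp [hv₀, Pi.single_apply, Finset.sum_ite_eq', ite_pow]
    rw [hv1, mul_one] at hm
    have hws : (E s).mulVec v₀ i = E s i j := by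
      rw [hv₀, Matrix.mulVec_single]
      simp
    have hsq : (E s i j) ^ 2 ≤ Real.exp (-(2 * c * s)) := by
      calc (E s i j) ^ 2 = ((E s).mulVec v₀ i) ^ 2 := by rw [hws]
        _ ≤ ∑ i, ((E s).mulVec v₀ i) ^ 2 :=
            Finset.single_le_sum (f := fun k => ((E s).mulVec v₀ k) ^ 2)
              (fun k _ => sq_nonneg _) (Finset.mem_univ i)
        _ ≤ Real.exp (-(2 * c * s)) := hm
    have hexp2 : Real.exp (-(2 * c * s)) = (Real.exp (-(c * s))) ^ 2 := by
      rw [← Real.exp_nat_mul]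
      congr 1
      push_cast
      ring
    calc |E s i j| = Real.sqrt ((E s i j) ^ 2) := (Real.sqrt_sq_eq_abs _).symm
      _ ≤ Real.sqrt (Real.exp (-(2 * c * s))) := Real.sqrt_le_sqrt hsq
      _ = Real.exp (-(c * s)) := by rw [hexp2, Real.sqrt_sq (Real.exp_nonneg _)]
  rw [Matrix.norm_le_iff (Real.exp_nonneg _)]
  intro i j
  rw [Real.norm_eq_abs]
  exact hentry i j

end SAux

set_option maxHeartbeats 1000000 in
/-- If the real `n × n` matrix `Γ` has positive-definite symmetric part,
then `Γ` is invertible, `s ↦ exp (-s Γ)` is Bochner integrable on `[0, ∞)`, and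
`∫₀^∞ exp (-s Γ) ds = Γ⁻¹`. -/
theorem stmt_3 (n : ℕ) (Γ : Matrix (Fin n) (Fin n) ℝ)
    (hΓ : ∀ v : Fin n → ℝ, v ≠ 0 → 0 < v ⬝ᵥ Γ.mulVec v) :
    IsUnit Γ.det ∧
    @IntegrableOn _ _ _ _ SeminormedAddGroup.toContinuousENorm (fun s : ℝ => NormedSpace.exp (-(s • Γ))) (Set.Ici 0) volume ∧
    ∫ s in Set.Ici (0 : ℝ), NormedSpace.exp (-(s • Γ)) = Γ⁻¹ := by
  classical
  -- invertibility
  have hdet : IsUnit Γ.det := by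
    rw [isUnit_iff_ne_zero]
    intro h0
    obtain ⟨v, hv, hv0⟩ := (Matrix.exists_mulVec_eq_zero_iff).mpr h0
    have := hΓ v hv
    rw [hv0, dotProduct_zero] at this
    exact lt_irrefl 0 this
  -- coercivity constant
  obtain ⟨c, hc, hcle⟩ : ∃ c : ℝ, 0 < c ∧
      ∀ v : Fin n → ℝ, c * (∑ i, v i ^ 2) ≤ v ⬝ᵥ Γ.mulVec v := by
    rcases Nat.eq_zero_or_pos n with hn | hn
    · refine ⟨1, one_pos, fun v => ?_⟩
      subst hn
      simp [dotProduct]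
    · set S : Set (Fin n → ℝ) := {v | ∑ i, v i ^ 2 = 1} with hS
      have hsum_cont : Continuous fun v : Fin n → ℝ => ∑ i, v i ^ 2 := by fun_prop
      have hcont : Continuous fun v : Fin n → ℝ => v ⬝ᵥ Γ.mulVec v := by
        simp only [dotProduct, Matrix.mulVec]
        fun_prop
      have hScompact : IsCompact S := by
        have hclosed : IsClosed S := isClosed_eq hsum_cont continuous_const
        have hsub : S ⊆ Metric.closedBall 0 1 := by
          intro v hv
          rw [Metric.mem_closedBall, dist_zero_right]
          rw [pi_norm_le_iff_of_nonneg zero_le_one]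
          intro i
          rw [Real.norm_eq_abs]
          have h1 : v i ^ 2 ≤ 1 := by
            rw [← hv]
            exact Finset.single_le_sum (f := fun k => v k ^ 2)
              (fun k _ => sq_nonneg _) (Finset.mem_univ i)
          calc |v i| = Real.sqrt (v i ^ 2) := (Real.sqrt_sq_eq_abs _).symm
            _ ≤ Real.sqrt 1 := Real.sqrt_le_sqrt h1
            _ = 1 := Real.sqrt_one
        exact (isCompact_closedBall (0 : Fin n → ℝ) 1).of_isClosed_subset hclosed hsub
      have hSne : S.Nonempty := by
        refine ⟨Pi.single ⟨0, hn⟩ 1, ?_⟩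
        show (∑ i, (Pi.single (⟨0, hn⟩ : Fin n) (1 : ℝ) : Fin n → ℝ) i ^ 2) = 1
        simp [Pi.single_apply, Finset.sum_ite_eq', ite_pow]
      obtain ⟨v₀, hv₀S, hmin'⟩ := hScompact.exists_isMinOn hSne hcont.continuousOn
      have hmin : ∀ u ∈ S, v₀ ⬝ᵥ Γ.mulVec v₀ ≤ u ⬝ᵥ Γ.mulVec u := fun u hu =>
        isMinOn_iff.mp hmin' u hu
      have hv₀ne : v₀ ≠ 0 := by
        intro h0
        have : (∑ i, v₀ i ^ 2) = 1 := hv₀S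
        rw [h0] at this
        simp at this
      refine ⟨v₀ ⬝ᵥ Γ.mulVec v₀, hΓ v₀ hv₀ne, fun v => ?_⟩
      rcases eq_or_ne v 0 with rfl | hv
      · simp
      · set r : ℝ := Real.sqrt (∑ i, v i ^ 2) with hr
        have hsumpos : 0 < ∑ i, v i ^ 2 := by
          obtain ⟨i, hi⟩ := Function.ne_iff.mp hv
          exact Finset.sum_pos' (fun k _ => sq_nonneg _)
            ⟨i, Finset.mem_univ i, lt_of_le_of_ne (sq_nonneg _) (Ne.symm (pow_ne_zero 2 hi))⟩
        have hrpos : 0 < r := Real.sqrt_pos.mpr hsumpos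
        have hr2 : r ^ 2 = ∑ i, v i ^ 2 := Real.sq_sqrt hsumpos.le
        set u : Fin n → ℝ := r⁻¹ • v with hu
        have huS : u ∈ S := by
          show (∑ i, u i ^ 2) = 1
          have : ∀ i, u i ^ 2 = r⁻¹ ^ 2 * v i ^ 2 := fun i => by
            simp [hu, mul_pow]
          rw [Finset.sum_congr rfl fun i _ => this i, ← Finset.mul_sum, ← hr2]
          field_simp
        have hquad : u ⬝ᵥ Γ.mulVec u = r⁻¹ ^ 2 * (v ⬝ᵥ Γ.mulVec v) := by
          rw [hu, smul_dotProduct, Matrix.mulVec_smul, dotProduct_smul]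
          simp [smul_eq_mul, sq]
          ring
        have h1 : v₀ ⬝ᵥ Γ.mulVec v₀ ≤ r⁻¹ ^ 2 * (v ⬝ᵥ Γ.mulVec v) := by
          rw [← hquad]
          exact hmin u huS
          -- end
        have h2 : (v₀ ⬝ᵥ Γ.mulVec v₀) * r ^ 2 ≤ v ⬝ᵥ Γ.mulVec v := by
          have hr2pos : (0 : ℝ) < r ^ 2 := by positivity
          rw [← le_div_iff₀ hr2pos] at *
          calc v₀ ⬝ᵥ Γ.mulVec v₀ ≤ r⁻¹ ^ 2 * (v ⬝ᵥ Γ.mulVec v) := h1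
            _ = (v ⬝ᵥ Γ.mulVec v) / r ^ 2 := by
              rw [inv_pow, inv_mul_eq_div]
        rw [← hr2]
        linarith [h2]
  -- restatement of the integrand
  have hneg : ∀ s : ℝ, -(s • Γ) = s • -Γ := fun s => (smul_neg s Γ).symm
  have hfun : (fun s : ℝ => NormedSpace.exp (-(s • Γ)))
      = fun s : ℝ => NormedSpace.exp (s • -Γ) := by
    funext s; rw [hneg s]
  set E : ℝ → Matrix (Fin n) (Fin n) ℝ := fun s => NormedSpace.exp (s • -Γ) with hE
  have hdecay := stmt3_norm_exp_le Γ hc hcle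
  have hcontE : Continuous E := stmt3_cont_exp (-Γ)
  -- integrability
  have hgint : IntegrableOn (fun s : ℝ => Real.exp (-(c * s))) (Set.Ici 0) volume := by
    rw [integrableOn_Ici_iff_integrableOn_Ioi]
    have h := exp_neg_integrableOn_Ioi 0 hc
    simpa [neg_mul] using h
  have hint : @IntegrableOn _ _ _ _ SeminormedAddGroup.toContinuousENorm E (Set.Ici 0) volume := by
    haveI : TopologicalSpace.PseudoMetrizableSpace (Matrix (Fin n) (Fin n) ℝ) :=
      PseudoEMetricSpace.pseudoMetrizableSpace
    refine Integrable.mono' hgint (hcontE.aestronglyMeasurable.restrict) ?_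
    refine (ae_restrict_iff' measurableSet_Ici).mpr (Filter.Eventually.of_forall ?_)
    exact fun s hs => hdecay s hs
  -- the integral
  have hGamInv : Γ * Γ⁻¹ = 1 := Matrix.mul_nonsing_inv Γ hdet
  have hF : ∀ t : ℝ, HasDerivAt (fun s => -(E s * Γ⁻¹)) (E t) t := by
    intro t
    have h2 := stmt3_hasDerivAt_exp_mul (-Γ) Γ⁻¹ t
    have h3 : -(E t * -Γ * Γ⁻¹) = E t := by
      rw [Matrix.mul_neg, Matrix.neg_mul, neg_neg, Matrix.mul_assoc, hGamInv,
        Matrix.mul_one]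
    rwa [h3] at h2
  have hTint : ∀ T : ℝ, ∫ s in (0 : ℝ)..T, E s = Γ⁻¹ - E T * Γ⁻¹ := by
    intro T
    rw [intervalIntegral.integral_eq_sub_of_hasDerivAt (fun t _ => hF t)
      (hcontE.intervalIntegrable 0 T)]
    have hE0 : E 0 = 1 := by
      show NormedSpace.exp ((0 : ℝ) • -Γ) = 1
      rw [zero_smul, NormedSpace.exp_zero]
    rw [hE0, Matrix.one_mul]
    abel
  have h1 : Filter.Tendsto (fun T => ∫ s in (0 : ℝ)..T, E s) Filter.atTop
      (nhds (∫ s in Set.Ioi (0 : ℝ), E s)) :=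
    intervalIntegral_tendsto_integral_Ioi 0 (hint.mono_set Set.Ioi_subset_Ici_self)
      Filter.tendsto_id
  have hE0lim : Filter.Tendsto E Filter.atTop (nhds 0) := by
    apply squeeze_zero_norm' (a := fun T => Real.exp (-(c * T)))
    · filter_upwards [Filter.eventually_ge_atTop (0 : ℝ)] with T hT
      exact hdecay T hT
    · have := Real.tendsto_exp_neg_atTop_nhds_zero.comp
        (Filter.tendsto_id.const_mul_atTop hc)
      exact this
  have h2 : Filter.Tendsto (fun T => Γ⁻¹ - E T * Γ⁻¹) Filter.atTop (nhds Γ⁻¹) := by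
    have hmul : Filter.Tendsto (fun T => E T * Γ⁻¹) Filter.atTop
        (nhds ((0 : Matrix (Fin n) (Fin n) ℝ) * Γ⁻¹)) := by
      exact ((continuous_id.matrix_mul continuous_const).tendsto 0).comp hE0lim
    rw [Matrix.zero_mul] at hmul
    have := Filter.Tendsto.sub (tendsto_const_nhds (x := Γ⁻¹)) hmul
    simpa using this
  have hIoi : ∫ s in Set.Ioi (0 : ℝ), E s = Γ⁻¹ := by
    refine tendsto_nhds_unique ?_ h2
    have : (fun T => ∫ s in (0 : ℝ)..T, E s) = fun T => Γ⁻¹ - E T * Γ⁻¹ := by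
      funext T; exact hTint T
    rwa [this] at h1
  refine ⟨hdet, ?_, ?_⟩
  · rw [hfun]; exact hint
  · rw [hfun, MeasureTheory.integral_Ici_eq_integral_Ioi]
    exact hIoi
end

section
/- Let Γ be a real n×n matrix whose symmetric part is positive definite, let Σ be an invertible real n×n matrix, let L be a real n×d matrix, and let m ∈ ℝⁿ. Define the quasi-Gaussian response operator R = (∫₀^∞ exp(−sΓ) Σ ds) Σ⁻¹ and the stationary mean map z̄(x) = m + Γ⁻¹ L x. Then R = Γ⁻¹, and consequently for all x, x* ∈ ℝᵈ one has z̄(x) − z̄(x*) = R L (x − x*); that is, the quasi-Gaussian linear response formula recovers the exact change of the stationary mean for perturbations x − x* of arbitrary size. -/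
open Matrix MeasureTheory

namespace Stmt4Aux

open NormedSpace

variable {n : ℕ}

lemma dot_self_nonneg (v : Fin n → ℝ) : 0 ≤ v ⬝ᵥ v :=
  Finset.sum_nonneg fun i _ => mul_self_nonneg (v i)

lemma dot_self_pos {v : Fin n → ℝ} (hv : v ≠ 0) : 0 < v ⬝ᵥ v := by
  rcases lt_or_eq_of_le (dot_self_nonneg v) with h | h
  · exact h
  · exact absurd (dotProduct_self_eq_zero.mp h.symm) hv

lemma coercive (Γ : Matrix (Fin n) (Fin n) ℝ)
    (hΓ : ∀ v : Fin n → ℝ, v ≠ 0 → 0 < v ⬝ᵥ Γ.mulVec v) :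
    ∃ c > 0, ∀ v : Fin n → ℝ, c * (v ⬝ᵥ v) ≤ v ⬝ᵥ Γ.mulVec v := by
  rcases Nat.eq_zero_or_pos n with hn | hn
  · refine ⟨1, one_pos, fun v => ?_⟩
    subst hn
    simp [dotProduct]
  · haveI : Nonempty (Fin n) := ⟨⟨0, hn⟩⟩
    have hq : Continuous fun v : Fin n → ℝ => v ⬝ᵥ Γ.mulVec v := by
      simp only [dotProduct, Matrix.mulVec]
      fun_prop
    have hd : Continuous fun v : Fin n → ℝ => v ⬝ᵥ v := by
      simp only [dotProduct]; fun_prop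
    set K := Metric.sphere (0 : Fin n → ℝ) 1 with hK
    have hKc : IsCompact K := isCompact_sphere 0 1
    have hKne : K.Nonempty := by
      obtain ⟨x, hx⟩ := exists_norm_eq (Fin n → ℝ) (le_of_lt one_pos)
      exact ⟨x, by simp [hK, hx]⟩
    have hcontOn : ContinuousOn (fun v : Fin n → ℝ => (v ⬝ᵥ Γ.mulVec v) / (v ⬝ᵥ v)) K := by
      apply ContinuousOn.div hq.continuousOn hd.continuousOn
      intro v hv
      have hvne : v ≠ 0 := by
        intro h0
        simp [hK, h0] at hv
      exact ne_of_gt (dot_self_pos hvne)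
    obtain ⟨v₀, hv₀K, hmin⟩ := hKc.exists_isMinOn hKne hcontOn
    have hv₀ne : v₀ ≠ 0 := by
      intro h0; simp [hK, h0] at hv₀K
    refine ⟨_, div_pos (hΓ v₀ hv₀ne) (dot_self_pos hv₀ne), fun v => ?_⟩
    rcases eq_or_ne v 0 with rfl | hvne
    · simp
    · have hvv : 0 < v ⬝ᵥ v := dot_self_pos hvne
      have hnv : ‖v‖ ≠ 0 := norm_ne_zero_iff.mpr hvne
      set u : Fin n → ℝ := ‖v‖⁻¹ • v with hu
      have huK : u ∈ K := by
        simp [hu, hK, norm_smul, abs_of_nonneg (inv_nonneg.mpr (norm_nonneg v)),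
          inv_mul_cancel₀ hnv]
      have hratio : (v₀ ⬝ᵥ Γ.mulVec v₀) / (v₀ ⬝ᵥ v₀) ≤ (u ⬝ᵥ Γ.mulVec u) / (u ⬝ᵥ u) := hmin huK
      have ha : (‖v‖⁻¹) * (‖v‖⁻¹) ≠ 0 := by positivity
      have hqu : u ⬝ᵥ Γ.mulVec u = (‖v‖⁻¹ * ‖v‖⁻¹) * (v ⬝ᵥ Γ.mulVec v) := by
        simp only [hu, Matrix.mulVec_smul, smul_dotProduct, dotProduct_smul,
          smul_eq_mul]
        ring
      have hdu : u ⬝ᵥ u = (‖v‖⁻¹ * ‖v‖⁻¹) * (v ⬝ᵥ v) := by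
        simp [hu, smul_dotProduct, dotProduct_smul, smul_eq_mul]
        ring
      have : (v₀ ⬝ᵥ Γ.mulVec v₀) / (v₀ ⬝ᵥ v₀) ≤ (v ⬝ᵥ Γ.mulVec v) / (v ⬝ᵥ v) := by
        rw [hqu, hdu, mul_div_mul_left _ _ ha] at hratio
        exact hratio
      calc (v₀ ⬝ᵥ Γ.mulVec v₀) / (v₀ ⬝ᵥ v₀) * (v ⬝ᵥ v)
          ≤ (v ⬝ᵥ Γ.mulVec v) / (v ⬝ᵥ v) * (v ⬝ᵥ v) := by
            exact mul_le_mul_of_nonneg_right this (le_of_lt hvv)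
        _ = v ⬝ᵥ Γ.mulVec v := div_mul_cancel₀ _ (ne_of_gt hvv)

noncomputable def mulVecCLM (v : Fin n → ℝ) :
    Matrix (Fin n) (Fin n) ℝ →L[ℝ] (Fin n → ℝ) :=
  LinearMap.toContinuousLinearMap
    { toFun := fun M : Matrix (Fin n) (Fin n) ℝ => M.mulVec v
      map_add' := fun A B => Matrix.add_mulVec A B v
      map_smul' := fun a A => Matrix.smul_mulVec a A v }

@[simp] lemma mulVecCLM_apply (v : Fin n → ℝ) (M : Matrix (Fin n) (Fin n) ℝ) :
    mulVecCLM v M = M.mulVec v := rfl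

lemma tendsto_slope_matexp (Γ : Matrix (Fin n) (Fin n) ℝ) (s : ℝ) :
    Filter.Tendsto (slope (fun t : ℝ => exp (-(t • Γ))) s) (nhdsWithin s {s}ᶜ)
      (nhds (-(Γ * exp (-(s • Γ))))) := by
  letI : SeminormedRing (Matrix (Fin n) (Fin n) ℝ) := Matrix.linftyOpSemiNormedRing
  letI : NormedRing (Matrix (Fin n) (Fin n) ℝ) := Matrix.linftyOpNormedRing
  letI : NormedAlgebra ℝ (Matrix (Fin n) (Fin n) ℝ) := Matrix.linftyOpNormedAlgebra
  have h : HasDerivAt (fun t : ℝ => exp (-(t • Γ))) (-(Γ * exp (-(s • Γ)))) s := by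
    have h0 := hasDerivAt_exp_smul_const' (𝕂 := ℝ) (-Γ) s
    simp only [smul_neg, neg_mul] at h0
    exact h0
  exact hasDerivAt_iff_tendsto_slope.mp h

lemma hasDerivAt_expMulVec (Γ : Matrix (Fin n) (Fin n) ℝ) (v : Fin n → ℝ) (s : ℝ) :
    HasDerivAt (fun t : ℝ => (exp (-(t • Γ))).mulVec v)
      (-(Γ.mulVec ((exp (-(s • Γ))).mulVec v))) s := by
  letI : SeminormedRing (Matrix (Fin n) (Fin n) ℝ) := Matrix.linftyOpSemiNormedRing
  letI : NormedRing (Matrix (Fin n) (Fin n) ℝ) := Matrix.linftyOpNormedRing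
  letI : NormedAlgebra ℝ (Matrix (Fin n) (Fin n) ℝ) := Matrix.linftyOpNormedAlgebra
  have h : HasDerivAt (fun t : ℝ => exp (-(t • Γ))) (-(Γ * exp (-(s • Γ)))) s :=
    hasDerivAt_iff_tendsto_slope.mpr (tendsto_slope_matexp Γ s)
  have h2 := (mulVecCLM v).hasFDerivAt.comp_hasDerivAt s h
  refine h2.congr_deriv ?_
  show (-(Γ * exp (-(s • Γ)))).mulVec v = _
  rw [Matrix.neg_mulVec, Matrix.mulVec_mulVec]

lemma dot_decay (Γ : Matrix (Fin n) (Fin n) ℝ) {c : ℝ} (hc : 0 < c)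
    (hco : ∀ v : Fin n → ℝ, c * (v ⬝ᵥ v) ≤ v ⬝ᵥ Γ.mulVec v)
    (v : Fin n → ℝ) {s : ℝ} (hs : 0 ≤ s) :
    ((exp (-(s • Γ))).mulVec v) ⬝ᵥ ((exp (-(s • Γ))).mulVec v)
      ≤ Real.exp (-(2 * c * s)) * (v ⬝ᵥ v) := by
  set g : ℝ → Fin n → ℝ := fun t => (exp (-(t • Γ))).mulVec v with hg
  have hgd : ∀ t, HasDerivAt g (-(Γ.mulVec (g t))) t := fun t => hasDerivAt_expMulVec Γ v t
  set q : ℝ → ℝ := fun t => g t ⬝ᵥ g t with hq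
  have hqd : ∀ t, HasDerivAt q (-(2 * (g t ⬝ᵥ Γ.mulVec (g t)))) t := by
    intro t
    have hcomp : ∀ i, HasDerivAt (fun u => g u i) ((-(Γ.mulVec (g t))) i) t :=
      fun i => (hasDerivAt_pi.mp (hgd t)) i
    have hsum : HasDerivAt (fun u => ∑ i, g u i * g u i)
        (∑ i, ((-(Γ.mulVec (g t))) i * g t i + g t i * (-(Γ.mulVec (g t))) i)) t :=
      HasDerivAt.fun_sum fun i _ => (hcomp i).mul (hcomp i)
    have hval : (∑ i, ((-(Γ.mulVec (g t))) i * g t i + g t i * (-(Γ.mulVec (g t))) i))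
        = -(2 * (g t ⬝ᵥ Γ.mulVec (g t))) := by
      have h1 : ∀ i, (-(Γ.mulVec (g t))) i * g t i + g t i * (-(Γ.mulVec (g t))) i
          = -(2 * (g t i * (Γ.mulVec (g t)) i)) := by
        intro i; simp only [Pi.neg_apply]; ring
      rw [Finset.sum_congr rfl fun i _ => h1 i]
      simp [dotProduct, Finset.mul_sum]
    have : HasDerivAt (fun u => ∑ i, g u i * g u i) (-(2 * (g t ⬝ᵥ Γ.mulVec (g t)))) t := by
      rw [← hval]; exact hsum
    simpa only [hq, dotProduct] using this
  set φ : ℝ → ℝ := fun t => Real.exp (2 * c * t) * q t with hφ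
  have hφd : ∀ t, HasDerivAt φ
      (Real.exp (2 * c * t) * (2 * c) * q t
        + Real.exp (2 * c * t) * (-(2 * (g t ⬝ᵥ Γ.mulVec (g t))))) t := by
    intro t
    have h1 : HasDerivAt (fun u : ℝ => 2 * c * u) (2 * c) t := by
      simpa using (hasDerivAt_id t).const_mul (2 * c)
    have he : HasDerivAt (fun u : ℝ => Real.exp (2 * c * u)) (Real.exp (2 * c * t) * (2 * c)) t :=
      h1.exp
    exact he.mul (hqd t)
  have hanti : Antitone φ := by
    refine antitone_of_deriv_nonpos (fun t => (hφd t).differentiableAt) fun t => ?_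
    rw [(hφd t).deriv]
    have h1 : c * (g t ⬝ᵥ g t) ≤ g t ⬝ᵥ Γ.mulVec (g t) := hco (g t)
    have h2 : (0 : ℝ) < Real.exp (2 * c * t) := Real.exp_pos _
    have h3 : 0 ≤ q t := dot_self_nonneg (g t)
    nlinarith [h1, h2, h3]
  have hφ0 : φ 0 = v ⬝ᵥ v := by
    simp [hφ, hq, hg]
  have hle : φ s ≤ v ⬝ᵥ v := hφ0 ▸ hanti hs
  have hqs : q s = Real.exp (-(2 * c * s)) * φ s := by
    rw [hφ, ← mul_assoc, ← Real.exp_add]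
    simp
  calc q s = Real.exp (-(2 * c * s)) * φ s := hqs
    _ ≤ Real.exp (-(2 * c * s)) * (v ⬝ᵥ v) :=
        mul_le_mul_of_nonneg_left hle (Real.exp_pos _).le

lemma entry_bound (Γ : Matrix (Fin n) (Fin n) ℝ)
    (hΓ : ∀ v : Fin n → ℝ, v ≠ 0 → 0 < v ⬝ᵥ Γ.mulVec v) :
    ∃ c > 0, ∀ s : ℝ, 0 ≤ s → ∀ i j,
      |(exp (-(s • Γ))) i j| ≤ Real.exp (-(c * s)) := by
  obtain ⟨c, hc, hco⟩ := coercive Γ hΓ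
  refine ⟨c, hc, fun s hs i j => ?_⟩
  have h := dot_decay Γ hc hco (Pi.single j 1) hs
  set E := exp (-(s • Γ)) with hE
  have hgv : E.mulVec (Pi.single j 1) = fun i => E i j := by
    rw [Matrix.mulVec_single]; simp; rfl
  have hdv : (Pi.single j 1 : Fin n → ℝ) ⬝ᵥ Pi.single j 1 = 1 := by
    simp
  rw [hgv, hdv, mul_one] at h
  have hterm : E i j * E i j ≤ Real.exp (-(2 * c * s)) := by
    refine le_trans ?_ h
    have := Finset.single_le_sum (f := fun k => E k j * E k j)
      (fun k _ => mul_self_nonneg _) (Finset.mem_univ i)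
    simpa [dotProduct] using this
  have hsq : |E i j| ^ 2 ≤ Real.exp (-(c * s)) ^ 2 := by
    have : Real.exp (-(2 * c * s)) = Real.exp (-(c * s)) ^ 2 := by
      rw [sq, ← Real.exp_add]; ring_nf
    calc |E i j| ^ 2 = E i j * E i j := by rw [sq, abs_mul_abs_self]
      _ ≤ Real.exp (-(2 * c * s)) := hterm
      _ = Real.exp (-(c * s)) ^ 2 := this
  calc |E i j| = Real.sqrt (|E i j| ^ 2) := by rw [Real.sqrt_sq (abs_nonneg _)]
    _ ≤ Real.sqrt (Real.exp (-(c * s)) ^ 2) := Real.sqrt_le_sqrt hsq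
    _ = Real.exp (-(c * s)) := Real.sqrt_sq (Real.exp_pos _).le

end Stmt4Aux

attribute [local instance] Matrix.normedAddCommGroup Matrix.normedSpace

namespace Stmt4Aux

open NormedSpace Filter

instance instCENorm {n : ℕ} : ContinuousENorm (Matrix (Fin n) (Fin n) ℝ) := by
  exact (inferInstance : ContinuousENorm (Fin n → Fin n → ℝ))

instance instPM {n : ℕ} : TopologicalSpace.PseudoMetrizableSpace (Matrix (Fin n) (Fin n) ℝ) := by
  exact (inferInstance : TopologicalSpace.PseudoMetrizableSpace (Fin n → Fin n → ℝ))

lemma integrableOn_exp {n : ℕ} (Γ : Matrix (Fin n) (Fin n) ℝ)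
    (hΓ : ∀ v : Fin n → ℝ, v ≠ 0 → 0 < v ⬝ᵥ Γ.mulVec v) :
    IntegrableOn (fun s : ℝ => exp (-(s • Γ))) (Set.Ici 0) := by
  obtain ⟨c, hc, hbd⟩ := entry_bound Γ hΓ
  have hder : ∀ s : ℝ, HasDerivAt (fun t : ℝ => exp (-(t • Γ)))
      (-(Γ * exp (-(s • Γ)))) s :=
    fun s => hasDerivAt_iff_tendsto_slope.mpr (tendsto_slope_matexp Γ s)
  have hcont : Continuous fun s : ℝ => exp (-(s • Γ)) :=
    continuous_iff_continuousAt.mpr fun s => (hder s).continuousAt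
  have hnorm : ∀ s : ℝ, 0 ≤ s → ‖exp (-(s • Γ))‖ ≤ Real.exp (-(c * s)) := by
    intro s hs
    rw [Matrix.norm_le_iff (Real.exp_pos _).le]
    intro i j
    simpa [Real.norm_eq_abs] using hbd s hs i j
  refine Integrable.mono' (g := fun s : ℝ => Real.exp (-(c * s)))
    ?_ (hcont.aestronglyMeasurable.restrict) ?_
  · have := exp_neg_integrableOn_Ioi 0 hc
    have h2 : IntegrableOn (fun x : ℝ => Real.exp (-(c * x))) (Set.Ioi 0) := by
      simpa [neg_mul] using this
    exact Iff.mpr integrableOn_Ici_iff_integrableOn_Ioi h2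
  · filter_upwards [ae_restrict_mem measurableSet_Ici] with s hs
    exact hnorm s hs

lemma integral_exp_eq {n : ℕ} (Γ : Matrix (Fin n) (Fin n) ℝ)
    (hΓ : ∀ v : Fin n → ℝ, v ≠ 0 → 0 < v ⬝ᵥ Γ.mulVec v) :
    (∫ s in Set.Ici (0 : ℝ), exp (-(s • Γ))) = Γ⁻¹ := by
  obtain ⟨c, hc, hbd⟩ := entry_bound Γ hΓ
  have hGu : IsUnit Γ.det := by
    rw [isUnit_iff_ne_zero]
    intro h0
    obtain ⟨v, hvne, hv0⟩ := (Matrix.exists_mulVec_eq_zero_iff).mpr h0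
    have := hΓ v hvne
    rw [hv0] at this
    simp at this
  have hder : ∀ s : ℝ, HasDerivAt (fun t : ℝ => exp (-(t • Γ)))
      (-(Γ * exp (-(s • Γ)))) s :=
    fun s => hasDerivAt_iff_tendsto_slope.mpr (tendsto_slope_matexp Γ s)
  have hcont : Continuous fun s : ℝ => exp (-(s • Γ)) :=
    continuous_iff_continuousAt.mpr fun s => (hder s).continuousAt
  have hnorm : ∀ s : ℝ, 0 ≤ s → ‖exp (-(s • Γ))‖ ≤ Real.exp (-(c * s)) := by
    intro s hs
    rw [Matrix.norm_le_iff (Real.exp_pos _).le]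
    intro i j
    simpa [Real.norm_eq_abs] using hbd s hs i j
  have hint : IntegrableOn (fun s : ℝ => exp (-(s • Γ))) (Set.Ici 0) :=
    integrableOn_exp Γ hΓ
  -- FTC on [0, T]
  have hFTC : ∀ T : ℝ, (∫ s in (0:ℝ)..T, exp (-(s • Γ)))
      = Γ⁻¹ - Γ⁻¹ * exp (-(T • Γ)) := by
    intro T
    set L : Matrix (Fin n) (Fin n) ℝ →L[ℝ] Matrix (Fin n) (Fin n) ℝ :=
      LinearMap.toContinuousLinearMap (LinearMap.mulLeft ℝ Γ⁻¹) with hL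
    have hLa : ∀ M, L M = Γ⁻¹ * M := fun M => rfl
    have hF : ∀ s : ℝ, HasDerivAt (fun t : ℝ => Γ⁻¹ - Γ⁻¹ * exp (-(t • Γ)))
        (exp (-(s • Γ))) s := by
      intro s
      have h1 := L.hasFDerivAt.comp_hasDerivAt s (hder s)
      have h2 : HasDerivAt (fun t : ℝ => Γ⁻¹ * exp (-(t • Γ)))
          (-(exp (-(s • Γ)))) s := by
        have hval : L (-(Γ * exp (-(s • Γ)))) = -(exp (-(s • Γ))) := by
          rw [hLa, mul_neg, ← mul_assoc, Matrix.nonsing_inv_mul Γ hGu, one_mul]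
        have := h1
        exact this.congr_deriv hval
      have h3 := h2.const_sub Γ⁻¹
      simp only [neg_neg] at h3
      exact h3
    have := intervalIntegral.integral_eq_sub_of_hasDerivAt
      (f := fun t : ℝ => Γ⁻¹ - Γ⁻¹ * exp (-(t • Γ)))
      (fun s _ => hF s) (hcont.intervalIntegrable 0 T)
    rw [this]
    simp [exp_zero]
  have h1 : Tendsto (fun T : ℝ => ∫ s in (0:ℝ)..T, exp (-(s • Γ))) atTop
      (nhds (∫ s in Set.Ici (0:ℝ), exp (-(s • Γ)))) := by
    rw [MeasureTheory.integral_Ici_eq_integral_Ioi]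
    exact MeasureTheory.intervalIntegral_tendsto_integral_Ioi 0
      (hint.mono_set Set.Ioi_subset_Ici_self) tendsto_id
  have hexp0 : Tendsto (fun T : ℝ => exp (-(T • Γ))) atTop (nhds 0) := by
    have hg : Tendsto (fun T : ℝ => Real.exp (-(c * T))) atTop (nhds 0) := by
      have hct : Tendsto (fun T : ℝ => c * T) atTop atTop :=
        Tendsto.const_mul_atTop hc tendsto_id
      exact Real.tendsto_exp_neg_atTop_nhds_zero.comp hct
    refine squeeze_zero_norm' ?_ hg
    filter_upwards [eventually_ge_atTop (0:ℝ)] with T hT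
    exact hnorm T hT
  have h2 : Tendsto (fun T : ℝ => Γ⁻¹ - Γ⁻¹ * exp (-(T • Γ))) atTop (nhds Γ⁻¹) := by
    set L : Matrix (Fin n) (Fin n) ℝ →L[ℝ] Matrix (Fin n) (Fin n) ℝ :=
      LinearMap.toContinuousLinearMap (LinearMap.mulLeft ℝ Γ⁻¹) with hL
    have hmul : Tendsto (fun T : ℝ => Γ⁻¹ * exp (-(T • Γ))) atTop (nhds 0) := by
      have := (L.continuous.tendsto 0).comp hexp0
      simpa [Function.comp_def, hL] using this
    have := (tendsto_const_nhds :
      Tendsto (fun _ : ℝ => Γ⁻¹) atTop (nhds Γ⁻¹)).sub hmul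
    simpa using this
  exact tendsto_nhds_unique (h1.congr hFTC) h2

end Stmt4Aux

/-- Let `Γ` be a real `n × n` matrix with positive-definite symmetric part,
`S` an invertible `n × n` matrix (the stationary covariance), `L` an `n × d` matrix and
`m ∈ ℝⁿ`. The quasi-Gaussian response operator `R = (∫₀^∞ exp (-sΓ) S ds) S⁻¹` equals `Γ⁻¹`,
and consequently the stationary mean map `z̄(x) = m + Γ⁻¹ L x` satisfies
`z̄(x) - z̄(x*) = R L (x - x*)` for all `x, x*` of arbitrary distance. -/
theorem stmt_4 (n d : ℕ) (Γ S : Matrix (Fin n) (Fin n) ℝ)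
    (hΓ : ∀ v : Fin n → ℝ, v ≠ 0 → 0 < v ⬝ᵥ Γ.mulVec v)
    (hS : IsUnit S.det)
    (L : Matrix (Fin n) (Fin d) ℝ) (m : Fin n → ℝ)
    (R : Matrix (Fin n) (Fin n) ℝ)
    (hR : R = (∫ s in Set.Ici (0 : ℝ), NormedSpace.exp (-(s • Γ)) * S) * S⁻¹)
    (zbar : (Fin d → ℝ) → (Fin n → ℝ))
    (hzbar : ∀ x, zbar x = m + (Γ⁻¹ * L).mulVec x) :
    R = Γ⁻¹ ∧
    ∀ x xstar : Fin d → ℝ, zbar x - zbar xstar = (R * L).mulVec (x - xstar) := by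
  have hintS : (∫ s in Set.Ici (0:ℝ), NormedSpace.exp (-(s • Γ)) * S)
      = (∫ s in Set.Ici (0:ℝ), NormedSpace.exp (-(s • Γ))) * S := by
    set L' : Matrix (Fin n) (Fin n) ℝ →L[ℝ] Matrix (Fin n) (Fin n) ℝ :=
      LinearMap.toContinuousLinearMap (LinearMap.mulRight ℝ S) with hL'
    have hL'a : ∀ M, L' M = M * S := fun M => rfl
    have := L'.integral_comp_comm (Stmt4Aux.integrableOn_exp Γ hΓ)
    exact this
  have hR' : R = Γ⁻¹ := by
    rw [hR, hintS, Stmt4Aux.integral_exp_eq Γ hΓ,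
      Matrix.mul_nonsing_inv_cancel_right _ _ hS]
  refine ⟨hR', fun x xstar => ?_⟩
  rw [hzbar, hzbar, hR']
  simp [Matrix.mulVec_sub, add_sub_add_left_eq_sub]
end
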